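/- For all f, g ∈ A and all β, γ ∈ Ω¹, the metacurvature expression satisfies M(f, g·β, γ) = g·M(f, β, γ); that is, M(f, −, −) is A-linear in its second (and, by symmetry of P₁₁, its third) argument. (First half of the theorem that a flat torsion-free contravariant connection determines a metacurvature tensor.) -/
import Mathlib


/-- The metacurvature expression `M(f,β,γ) := P₂(f,P₁₁(β,γ)) − P₁₁(P₁(f,β),γ) − P₁₁(P₁(f,γ),β)`
of a flat, torsion-free contravariant connection is `A`-linear in its second argument:
`M(f, g•β, γ) = g • M(f, β, γ)`. -/
theorem metacurvature_linear_in_forms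
    {A : Type*} [CommRing A]
    {Ω1 Ω2 : Type*} [AddCommGroup Ω1] [Module A Ω1] [AddCommGroup Ω2] [Module A Ω2]
    (w : Ω1 →ₗ[A] Ω1 →ₗ[A] Ω2)
    (d0 : A →+ Ω1) (hd0 : ∀ f g : A, d0 (f * g) = f • d0 g + g • d0 f)
    (d1 : Ω1 →+ Ω2) (hd1d0 : ∀ f : A, d1 (d0 f) = 0)
    (P0 : A →+ A →+ A) (P1 : A →+ Ω1 →+ Ω1)
    (P11 : Ω1 →+ Ω1 →+ Ω2) (P2 : A →+ Ω2 →+ Ω2)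
    (hP0 : ∀ f g h : A, P0 f (g * h) = g * P0 f h + h * P0 f g)
    (hP1L : ∀ (f g : A) (β : Ω1), P1 (f * g) β = f • P1 g β + g • P1 f β)
    (hP1R : ∀ (f g : A) (β : Ω1), P1 f (g • β) = P0 f g • β + g • P1 f β)
    (hP11P : ∀ (f : A) (β γ : Ω1), P11 (f • β) γ = f • P11 β γ + w β (P1 f γ))
    (hP2L : ∀ (f g : A) (ω : Ω2), P2 f (g • ω) = P0 f g • ω + g • P2 f ω)
    (hP2w : ∀ (f : A) (β γ : Ω1), P2 f (w β γ) = w (P1 f β) γ + w β (P1 f γ))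
    (hsymm : ∀ β γ : Ω1, P11 β γ = P11 γ β)
    (hflat : ∀ (f g : A) (β : Ω1), P1 f (P1 g β) - P1 g (P1 f β) = P1 (P0 f g) β)
    (htf : ∀ f g : A, P1 f (d0 g) - P1 g (d0 f) = d0 (P0 f g))
    (hLeib : ∀ (f : A) (β : Ω1), d1 (P1 f β) = P11 (d0 f) β + P2 f (d1 β))
    (f g : A) (β γ : Ω1) :
    P2 f (P11 (g • β) γ) - P11 (P1 f (g • β)) γ - P11 (P1 f γ) (g • β)
      = g • (P2 f (P11 β γ) - P11 (P1 f β) γ - P11 (P1 f γ) β) := by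
  have hflat' : P1 f (P1 g γ) = P1 g (P1 f γ) + P1 (P0 f g) γ := by
    have h := hflat f g γ
    linear_combination (norm := abel) h
  rw [hsymm (P1 f γ) (g • β)]
  simp only [hP11P, hP1R, hP2L, hP2w, map_add, AddMonoidHom.add_apply, hflat', smul_add]
  rw [hsymm β (P1 f γ)]
  module
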